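/- If a closed walk w in a signed graph (G,τ) is odd (i.e., μ(w) = -1), then the multigraph [w] spanned by the edge terms of w contains a cycle of G which is an odd cycle in (G,τ). -/

import Mathlib

variable {V : Type*}

/-- The product of τ(e,u)·τ(e,v) over all edge terms e = uv of a walk in a signed
graph (G,τ), where the sign τ assigns a unit ±1 to each incidence. -/
def walkSign (G : SimpleGraph V) (τ : Sym2 V → V → ℤˣ) :
    {u v : V} → G.Walk u v → ℤˣ
  | _, _, SimpleGraph.Walk.nil => 1
  | _, _, @SimpleGraph.Walk.cons _ _ a b _ _ p =>
      τ s(a, b) a * τ s(a, b) b * walkSign G τ p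

/-- μ of a closed walk: (-1)^(number of unbalanced vertex terms).  A vertex term v
between consecutive edge terms e, e' (cyclically) is unbalanced iff τ(e,v)τ(e',v) = 1,
i.e. contributes the factor -τ(e,v)τ(e',v) = -1; multiplying these factors over all
vertex terms gives μ(w) = (-1)^{length w} · ∏_{edge terms e=uv} τ(e,u)τ(e,v). -/
def mu (G : SimpleGraph V) (τ : Sym2 V → V → ℤˣ) {u v : V} (w : G.Walk u v) : ℤˣ :=
  (-1) ^ w.length * walkSign G τ w


lemma walkSign_append (G : SimpleGraph V) (τ : Sym2 V → V → ℤˣ) {u v x : V}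
    (p : G.Walk u v) (q : G.Walk v x) :
    walkSign G τ (p.append q) = walkSign G τ p * walkSign G τ q := by
  induction p with
  | nil => simp [walkSign]
  | cons h p ih => simp [walkSign, ih, mul_assoc]

lemma mu_append (G : SimpleGraph V) (τ : Sym2 V → V → ℤˣ) {u v x : V}
    (p : G.Walk u v) (q : G.Walk v x) :
    mu G τ (p.append q) = mu G τ p * mu G τ q := by
  simp only [mu, walkSign_append, SimpleGraph.Walk.length_append, pow_add]
  exact mul_mul_mul_comm _ _ _ _

lemma mu_cons (G : SimpleGraph V) (τ : Sym2 V → V → ℤˣ) {u v x : V}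
    (h : G.Adj u v) (p : G.Walk v x) :
    mu G τ (SimpleGraph.Walk.cons h p) = -(τ s(u,v) u * τ s(u,v) v) * mu G τ p := by
  simp only [mu, walkSign, SimpleGraph.Walk.length_cons, pow_succ, mul_neg, mul_one,
    neg_mul, neg_inj]
  exact mul_left_comm _ _ _

lemma mu_rotate [DecidableEq V] (G : SimpleGraph V) (τ : Sym2 V → V → ℤˣ) {u v : V}
    (w : G.Walk v v) (h : u ∈ w.support) :
    mu G τ (w.rotate u h) = mu G τ w := by
  conv_rhs => rw [← w.take_spec h]
  rw [SimpleGraph.Walk.rotate, mu_append, mu_append, mul_comm]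

lemma length_rotate' [DecidableEq V] {G : SimpleGraph V} {u v : V}
    (w : G.Walk v v) (h : u ∈ w.support) :
    (w.rotate u h).length = w.length := by
  conv_rhs => rw [← w.take_spec h]
  rw [SimpleGraph.Walk.rotate, SimpleGraph.Walk.length_append,
    SimpleGraph.Walk.length_append, Nat.add_comm]

open SimpleGraph Walk in
/-- Splitting a closed walk whose base point occurs at least twice beyond position 0. -/
lemma split_closed_walk [DecidableEq V] {G : SimpleGraph V} {u : V} (w : G.Walk u u)
    (hc : 2 ≤ w.support.tail.count u) (τ : Sym2 V → V → ℤˣ) :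
    ∃ (w1 w2 : G.Walk u u), mu G τ w = mu G τ w1 * mu G τ w2 ∧
      w1.length + w2.length = w.length ∧ 1 ≤ w1.length ∧ 1 ≤ w2.length ∧
      (∀ e ∈ w1.edges, e ∈ w.edges) ∧ (∀ e ∈ w2.edges, e ∈ w.edges) ∧
      (∀ y ∈ w1.support, y ∈ w.support) ∧ (∀ y ∈ w2.support, y ∈ w.support) := by
  cases w with
  | nil => simp at hc
  | @cons _ b _ hadj p =>
    have hts : (SimpleGraph.Walk.cons hadj p).support.tail = p.support := by
      simp [SimpleGraph.Walk.support_cons]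
    rw [hts] at hc
    have hu' : u ∈ p.support := List.count_pos_iff.mp (by omega)
    set q1 := p.takeUntil u hu' with hq1
    set q2 := p.dropUntil u hu' with hq2
    have hspec : q1.append q2 = p := p.take_spec hu'
    refine ⟨SimpleGraph.Walk.cons hadj q1, q2, ?_, ?_, ?_, ?_, ?_, ?_, ?_, ?_⟩
    · rw [mu_cons, mu_cons, ← hspec, mu_append, mul_assoc]
    · rw [SimpleGraph.Walk.length_cons, SimpleGraph.Walk.length_cons, ← hspec,
        SimpleGraph.Walk.length_append]
      omega
    · simp [SimpleGraph.Walk.length_cons]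
    · -- q2 nonnil
      have h1 : q1.support.count u = 1 := p.count_support_takeUntil_eq_one hu'
      have hps : p.support = q1.support ++ q2.support.tail := by
        rw [← hspec, SimpleGraph.Walk.support_append]
      have : p.support.count u = q1.support.count u + q2.support.tail.count u := by
        rw [hps, List.count_append]
      have hcnt : 1 ≤ q2.support.tail.count u := by omega
      have hlen : q2.support.tail.length = q2.length := by
        have := SimpleGraph.Walk.length_support q2
        simp [List.length_tail, this]
      have := List.count_le_length (l := q2.support.tail) (a := u)
      omega
    · intro e he
      rw [SimpleGraph.Walk.edges_cons] at he ⊢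
      rcases List.mem_cons.mp he with he | he
      · exact List.mem_cons.mpr (Or.inl he)
      · exact List.mem_cons_of_mem _ (p.edges_takeUntil_subset hu' he)
    · intro e he
      rw [SimpleGraph.Walk.edges_cons]
      exact List.mem_cons_of_mem _ (p.edges_dropUntil_subset hu' he)
    · intro y hy
      rw [SimpleGraph.Walk.support_cons] at hy ⊢
      rcases List.mem_cons.mp hy with hy | hy
      · exact List.mem_cons.mpr (Or.inl hy)
      · exact List.mem_cons_of_mem _ (p.support_takeUntil_subset hu' hy)
    · intro y hy
      rw [SimpleGraph.Walk.support_cons]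
      exact List.mem_cons_of_mem _ (p.support_dropUntil_subset hu' hy)

/-- If a closed walk w in a signed graph (G,τ) is odd (μ(w) = -1), then
the multigraph [w] spanned by the edge terms of w contains a cycle of G which is odd
in (G,τ). -/
theorem odd_walk_contains_odd_cycle (G : SimpleGraph V) (τ : Sym2 V → V → ℤˣ) (v : V)
    (w : G.Walk v v) (hodd : mu G τ w = -1) :
    ∃ (x : V) (c : G.Walk x x), c.IsCycle ∧ mu G τ c = -1 ∧
      (∀ e ∈ c.edges, e ∈ w.edges) ∧ (∀ y ∈ c.support, y ∈ w.support) := by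
  classical
  suffices H : ∀ (n : ℕ) (v : V) (w : G.Walk v v), w.length ≤ n → mu G τ w = -1 →
      ∃ (x : V) (c : G.Walk x x), c.IsCycle ∧ mu G τ c = -1 ∧
        (∀ e ∈ c.edges, e ∈ w.edges) ∧ (∀ y ∈ c.support, y ∈ w.support) from
    H w.length v w le_rfl hodd
  intro n
  induction n with
  | zero =>
    intro v w hlen hodd
    cases w with
    | nil => simp [mu, walkSign] at hodd
    | cons h p => simp at hlen
  | succ n ih =>
    intro v w hlen hodd
    by_cases hnd : w.support.tail.Nodup
    · -- w itself is a cycle (the degenerate cases are impossible)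
      cases w with
      | nil => simp [mu, walkSign] at hodd
      | @cons _ b _ h p =>
        have hts : (SimpleGraph.Walk.cons h p).support.tail = p.support := by
          simp [SimpleGraph.Walk.support_cons]
        rw [hts] at hnd
        have hpath : p.IsPath := SimpleGraph.Walk.IsPath.mk' hnd
        have hne : s(v, b) ∉ p.edges := by
          intro hmem
          cases p with
          | nil => simp at hmem
          | @cons _ c _ h2 q =>
            rw [SimpleGraph.Walk.edges_cons, List.mem_cons] at hmem
            rcases hmem with hmem | hmem
            · -- first edge of p equals s(v,b): forces c = v, q : Walk v v with nodup support
              rw [Sym2.eq_iff] at hmem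
              rcases hmem with ⟨hvb, _⟩ | ⟨hvc, _⟩
              · exact h.ne hvb
              · subst hvc
                -- q : Walk v v with nodup support inside a nodup list ⇒ q = nil
                rw [SimpleGraph.Walk.support_cons] at hnd
                have hq : v ∈ q.support := q.end_mem_support
                cases q with
                | nil =>
                  -- w = v - b - v : compute mu = 1
                  rw [mu_cons, mu_cons, mu] at hodd
                  simp only [SimpleGraph.Walk.length_nil, pow_zero, one_mul] at hodd
                  rw [show s(b, v) = s(v, b) from Sym2.eq_swap] at hodd
                  rw [walkSign] at hodd
                  rw [mul_one, neg_mul_neg, mul_comm (τ s(v,b) b) (τ s(v,b) v),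
                    Int.units_mul_self] at hodd
                  exact absurd hodd (by decide)
                | cons h3 r =>
                  have : v ∈ (SimpleGraph.Walk.cons h3 r).support := hq
                  rw [List.nodup_cons] at hnd
                  have hv2 : v ∈ (SimpleGraph.Walk.cons h3 r).support := hq
                  rw [SimpleGraph.Walk.support_cons, List.nodup_cons] at hnd
                  exact hnd.2.1 (by
                    have := r.end_mem_support
                    exact this)
            · have hb : b ∈ q.support := by
                have : s(b, v) ∈ q.edges := by rwa [Sym2.eq_swap]
                exact q.fst_mem_support_of_mem_edges this
              rw [SimpleGraph.Walk.support_cons, List.nodup_cons] at hnd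
              exact hnd.1 hb
        have hcycle : (SimpleGraph.Walk.cons h p).IsCycle := by
          constructor
          · constructor
            · constructor
              rw [SimpleGraph.Walk.edges_cons, List.nodup_cons]
              exact ⟨hne, hpath.isTrail.edges_nodup⟩
            · simp
          · rwa [hts]
        exact ⟨v, SimpleGraph.Walk.cons h p, hcycle, hodd, fun e he => he, fun y hy => hy⟩
    · -- there is a repeated vertex in the tail: rotate there and split
      obtain ⟨u, hu⟩ := List.exists_duplicate_iff_not_nodup.mpr hnd
      have hcnt : 2 ≤ w.support.tail.count u := List.duplicate_iff_two_le_count.mp hu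
      have humem : u ∈ w.support := by
        rw [SimpleGraph.Walk.support_eq_cons]
        exact List.mem_cons_of_mem _ hu.mem
      have hmu' : mu G τ (w.rotate u humem) = -1 := by rw [mu_rotate]; exact hodd
      have hcnt' : 2 ≤ (w.rotate u humem).support.tail.count u := by
        rw [(SimpleGraph.Walk.support_rotate w u humem).perm.count_eq]
        exact hcnt
      have hlen' : (w.rotate u humem).length = w.length := length_rotate' w humem
      have hedge' : ∀ e ∈ (w.rotate u humem).edges, e ∈ w.edges := fun e he =>
        ((SimpleGraph.Walk.rotate_edges w u humem).perm.mem_iff).mp he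
      have hsupp' : ∀ y ∈ (w.rotate u humem).support, y ∈ w.support := by
        intro y hy
        rw [SimpleGraph.Walk.support_eq_cons, List.mem_cons] at hy
        rcases hy with hy | hy
        · exact hy ▸ humem
        · rw [SimpleGraph.Walk.support_eq_cons]
          exact List.mem_cons_of_mem _
            (((SimpleGraph.Walk.support_rotate w u humem).perm.mem_iff).mp hy)
      obtain ⟨w1, w2, hmul, hadd, h1, h2, he1, he2, hs1, hs2⟩ :=
        split_closed_walk (w.rotate u humem) hcnt' τ
      have hor : mu G τ w1 = -1 ∨ mu G τ w2 = -1 := by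
        rcases Int.units_eq_one_or (mu G τ w1) with h | h
        · right
          rw [hmu', h, one_mul] at hmul
          exact hmul.symm
        · left; exact h
      rcases hor with hm | hm
      · obtain ⟨x, c, hc, hmc, hce, hcs⟩ := ih u w1 (by omega) hm
        exact ⟨x, c, hc, hmc, fun e he => hedge' e (he1 e (hce e he)),
          fun y hy => hsupp' y (hs1 y (hcs y hy))⟩
      · obtain ⟨x, c, hc, hmc, hce, hcs⟩ := ih u w2 (by omega) hm
        exact ⟨x, c, hc, hmc, fun e he => hedge' e (he2 e (hce e he)),
          fun y hy => hsupp' y (hs2 y (hcs y hy))⟩
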